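/- Let R_ν(x) = -2x (∫_{x}^{-ν} F̃_ν(u) du) / (2 q_ν(x) (x+ν)²) for x < -ν, where q_ν(x) = (-(x+ν))^{ν/2-1}e^{-(x+ν)/2}/(2^{ν/2}Γ(ν/2)) and F̃_ν(x) = ∫_x^{-ν} q_ν(u) du. Then lim_{x → -ν⁻} R_ν(x) = 4/(2+ν) and lim_{x → -∞} R_ν(x) = 0; consequently R_ν is bounded on (-∞, -ν). -/

import Mathlib

open MeasureTheory Real intervalIntegral Filter Topology
open Set

/-- Auxiliary (non-probability) density used on `(-∞, -ν)`. -/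
noncomputable def qnu (ν : ℝ) (x : ℝ) : ℝ :=
  if x < -ν then (-(x + ν)) ^ (ν / 2 - 1) * Real.exp (-(x + ν) / 2) /
    (2 ^ (ν / 2) * Real.Gamma (ν / 2)) else 0

/-- `F̃_ν(x) = ∫_x^{-ν} q_ν(u) du`. -/
noncomputable def Ftilnu (ν : ℝ) (x : ℝ) : ℝ := ∫ u in x..(-ν), qnu ν u

/-- The function `R_ν` controlling the derivative of the Stein solution on `(-∞,-ν)`. -/
noncomputable def Rnu (ν : ℝ) (x : ℝ) : ℝ :=
  -2 * x * (∫ u in x..(-ν), Ftilnu ν u) / (2 * qnu ν x * (x + ν) ^ 2)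

noncomputable def gg (p C w : ℝ) : ℝ :=
  if 0 < w then w ^ (p - 1) * Real.exp (w / 2) / C else 0

noncomputable def Gg (p C t : ℝ) : ℝ := ∫ w in (0:ℝ)..t, gg p C w

noncomputable def sg (p C t : ℝ) : ℝ := ∫ w in (0:ℝ)..t, w * gg p C w

variable {p C : ℝ}

lemma gg_of_pos {w : ℝ} (hw : 0 < w) : gg p C w = w ^ (p - 1) * Real.exp (w / 2) / C :=
  if_pos hw

lemma gg_of_nonpos {w : ℝ} (hw : w ≤ 0) : gg p C w = 0 := if_neg (not_lt.mpr hw)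

lemma gg_nonneg (hC : 0 < C) (w : ℝ) : 0 ≤ gg p C w := by
  unfold gg; split
  · positivity
  · exact le_refl 0

lemma gg_pos (hC : 0 < C) {w : ℝ} (hw : 0 < w) : 0 < gg p C w := by
  rw [gg_of_pos hw]; positivity

lemma gg_continuousAt {w : ℝ} (hw : w ≠ 0) : ContinuousAt (gg p C) w := by
  rcases hw.lt_or_gt with h | h
  · have : gg p C =ᶠ[𝓝 w] fun _ => (0:ℝ) := by
      filter_upwards [Iio_mem_nhds h] with u hu
      exact gg_of_nonpos (le_of_lt hu)
    exact this.continuousAt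
  · have heq : gg p C =ᶠ[𝓝 w] fun u => u ^ (p - 1) * Real.exp (u / 2) / C := by
      filter_upwards [Ioi_mem_nhds h] with u hu
      exact gg_of_pos hu
    have : ContinuousAt (fun u : ℝ => u ^ (p - 1) * Real.exp (u / 2) / C) w := by
      exact ((Real.continuousAt_rpow_const w (p-1) (Or.inl h.ne')).mul
        ((Real.continuous_exp.comp (continuous_id.div_const 2)).continuousAt)).div_const C
    exact this.congr heq.symm

lemma gg_measurable : Measurable (gg p C) := by
  apply measurable_of_continuousOn_compl_singleton (0 : ℝ)
  intro w hw
  exact (gg_continuousAt (by simpa using hw)).continuousWithinAt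

lemma gg_intervalIntegrable (hp : 0 < p) (hC : 0 < C) (a b : ℝ) :
    IntervalIntegrable (gg p C) volume a b := by
  have hrpow : IntervalIntegrable (fun w : ℝ => w ^ (p - 1)) volume a b :=
    intervalIntegrable_rpow' (by linarith)
  have hmul : IntervalIntegrable (fun w : ℝ => w ^ (p - 1) * (Real.exp (w / 2) / C))
      volume a b :=
    hrpow.mul_continuousOn ((Real.continuous_exp.comp (continuous_id.div_const 2)).div_const
      C).continuousOn
  refine hmul.mono_fun gg_measurable.aestronglyMeasurable.restrict ?_
  filter_upwards with w
  unfold gg; split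
  · simp only [Real.norm_eq_abs, mul_div_assoc]
    exact le_rfl
  · simp only [norm_zero, Real.norm_eq_abs, abs_div, abs_mul]
    positivity

lemma id_mul_gg_intervalIntegrable (hp : 0 < p) (hC : 0 < C) (a b : ℝ) :
    IntervalIntegrable (fun w => w * gg p C w) volume a b :=
  (gg_intervalIntegrable hp hC a b).continuousOn_mul continuous_id.continuousOn

lemma Gg_continuous (hp : 0 < p) (hC : 0 < C) : Continuous (Gg p C) :=
  intervalIntegral.continuous_primitive (fun a b => gg_intervalIntegrable hp hC a b) 0

lemma Gg_of_nonpos (hp : 0 < p) (hC : 0 < C) {t : ℝ} (ht : t ≤ 0) : Gg p C t = 0 := by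
  unfold Gg
  rw [intervalIntegral.integral_symm, intervalIntegral.integral_of_le ht, neg_eq_zero]
  rw [MeasureTheory.setIntegral_eq_zero_of_forall_eq_zero]
  intro w hw
  exact gg_of_nonpos hw.2

lemma linear_mul_gg_intervalIntegrable (hp : 0 < p) (hC : 0 < C) (c a b : ℝ) :
    IntervalIntegrable (fun w => (c + w) * gg p C w) volume a b :=
  (gg_intervalIntegrable hp hC a b).continuousOn_mul
    (continuous_const.add continuous_id).continuousOn

lemma Phi_hasDerivAt (hp : 0 < p) (hC : 0 < C) {w : ℝ} (hw : 0 < w) :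
    HasDerivAt (fun w => 2 * w ^ p * Real.exp (w / 2) / C)
      ((2 * p + w) * gg p C w) w := by
  have h1 : HasDerivAt (fun w : ℝ => w ^ p) (p * w ^ (p - 1)) w :=
    Real.hasDerivAt_rpow_const (Or.inl hw.ne')
  have h2 : HasDerivAt (fun w : ℝ => Real.exp (w / 2)) (Real.exp (w / 2) / 2) w := by
    refine ((Real.hasDerivAt_exp (w / 2)).comp w ((hasDerivAt_id w).div_const 2)).congr_deriv ?_
    simp [div_eq_mul_inv]
  have h3 := ((h1.mul h2).const_mul 2).div_const C
  refine (h3.congr_of_eventuallyEq (Filter.Eventually.of_forall fun x => ?_)).congr_deriv ?_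
  · simp only [Pi.mul_apply]; ring
  · rw [gg_of_pos hw]
    have hw1 : w ^ p = w ^ (p - 1) * w := by
      rw [← Real.rpow_add_one hw.ne' (p - 1)]; ring_nf
    rw [hw1]; ring

lemma keyIdentity (hp : 0 < p) (hC : 0 < C) {t : ℝ} (ht : 0 < t) :
    ∫ w in (0:ℝ)..t, (2 * p + w) * gg p C w = 2 * t * gg p C t := by
  set h : ℝ → ℝ := fun w => (2 * p + w) * gg p C w with hh
  set Φ : ℝ → ℝ := fun w => 2 * w ^ p * Real.exp (w / 2) / C with hΦ
  have hInt : ∀ a b : ℝ, IntervalIntegrable h volume a b :=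
    fun a b => linear_mul_gg_intervalIntegrable hp hC _ a b
  have hsub : ∀ ε ∈ Ioo (0:ℝ) t, ∫ w in (0:ℝ)..t, h w = (∫ w in (0:ℝ)..ε, h w) + (Φ t - Φ ε) := by
    intro ε hε
    have hFTC : ∫ w in ε..t, h w = Φ t - Φ ε := by
      apply intervalIntegral.integral_eq_sub_of_hasDerivAt
      · intro w hw
        rw [uIcc_of_le (le_of_lt hε.2)] at hw
        exact Phi_hasDerivAt hp hC (lt_of_lt_of_le hε.1 hw.1)
      · exact hInt ε t
    rw [← hFTC, intervalIntegral.integral_add_adjacent_intervals (hInt 0 ε) (hInt ε t)]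
  have hT : Tendsto (fun ε => (∫ w in (0:ℝ)..ε, h w) + (Φ t - Φ ε)) (𝓝[>] (0:ℝ))
      (𝓝 (Φ t)) := by
    have hprim : Tendsto (fun ε => ∫ w in (0:ℝ)..ε, h w) (𝓝[>] (0:ℝ)) (𝓝 0) := by
      have hc := (intervalIntegral.continuous_primitive hInt 0).continuousAt (x := 0)
      rw [ContinuousAt, intervalIntegral.integral_same] at hc
      exact hc.mono_left nhdsWithin_le_nhds
    have hΦ0 : Tendsto Φ (𝓝[>] (0:ℝ)) (𝓝 0) := by
      have hc : ContinuousAt Φ 0 := by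
        apply ContinuousAt.div_const
        exact ((continuousAt_const.mul (Real.continuousAt_rpow_const 0 p (Or.inr hp.le))).mul
          (Real.continuous_exp.comp (continuous_id.div_const 2)).continuousAt)
      have hv : Φ 0 = 0 := by
        simp [hΦ, Real.zero_rpow hp.ne']
      rw [ContinuousAt, hv] at hc
      exact hc.mono_left nhdsWithin_le_nhds
    have := hprim.add ((tendsto_const_nhds (x := Φ t)).sub hΦ0)
    simpa using this
  have hT' : Tendsto (fun _ : ℝ => ∫ w in (0:ℝ)..t, h w) (𝓝[>] (0:ℝ)) (𝓝 (Φ t)) := by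
    apply hT.congr'
    filter_upwards [Ioo_mem_nhdsGT_of_mem (Set.mem_Ico.mpr ⟨le_rfl, ht⟩)] with ε hε
    exact (hsub ε hε).symm
  have heq := tendsto_nhds_unique hT' tendsto_const_nhds
  rw [← heq, hΦ, gg_of_pos ht]
  have htp : t ^ p = t ^ (p - 1) * t := by
    rw [← Real.rpow_add_one ht.ne' (p - 1)]; ring_nf
  simp only [htp]; ring

lemma keyIdentity' (hp : 0 < p) (hC : 0 < C) {t : ℝ} (ht : 0 < t) :
    2 * p * Gg p C t + sg p C t = 2 * t * gg p C t := by
  rw [← keyIdentity hp hC ht]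
  unfold Gg sg
  rw [← intervalIntegral.integral_const_mul,
    ← intervalIntegral.integral_add ((gg_intervalIntegrable hp hC 0 t).const_mul _)
      (id_mul_gg_intervalIntegrable hp hC 0 t)]
  congr 1; ext w; ring

lemma GgIdentity (hp : 0 < p) (hC : 0 < C) (t : ℝ) :
    ∫ w in (0:ℝ)..t, Gg p C w = t * Gg p C t - sg p C t := by
  have hder : ∀ w ∈ uIcc (0:ℝ) t, HasDerivAt (fun w => w * Gg p C w)
      (Gg p C w + w * gg p C w) w := by
    intro w _
    rcases eq_or_ne w 0 with rfl | hw
    · -- derivative at 0 is Gg 0 + 0 = 0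
      rw [hasDerivAt_iff_tendsto_slope]
      have h0 : Gg p C 0 + 0 * gg p C 0 = 0 := by
        simp [Gg, intervalIntegral.integral_same]
      rw [h0]
      have hcont : Tendsto (Gg p C) (𝓝[≠] (0:ℝ)) (𝓝 0) := by
        have := (Gg_continuous hp hC).continuousAt (x := 0)
        rw [ContinuousAt] at this
        have h00 : Gg p C 0 = 0 := by simp [Gg]
        rw [h00] at this
        exact this.mono_left nhdsWithin_le_nhds
      apply hcont.congr'
      filter_upwards [self_mem_nhdsWithin] with u hu
      have : u ≠ 0 := hu
      rw [slope_def_field]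
      field_simp
      ring
    · rcases hw.lt_or_gt with hneg | hpos
      · -- w < 0 : both sides vanish near w
        have hloc : (fun w => w * Gg p C w) =ᶠ[𝓝 w] fun _ => (0:ℝ) := by
          filter_upwards [Iio_mem_nhds hneg] with u hu
          rw [Gg_of_nonpos hp hC (le_of_lt hu), mul_zero]
        have : HasDerivAt (fun _ : ℝ => (0:ℝ)) 0 w := hasDerivAt_const w 0
        have h2 := this.congr_of_eventuallyEq hloc
        refine h2.congr_deriv ?_
        rw [Gg_of_nonpos hp hC (le_of_lt hneg), gg_of_nonpos (le_of_lt hneg)]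
        ring
      · have h1 : HasDerivAt (Gg p C) (gg p C w) w := by
          apply intervalIntegral.integral_hasDerivAt_right
            (gg_intervalIntegrable hp hC 0 w)
          · exact gg_measurable.aestronglyMeasurable.stronglyMeasurableAtFilter
          · exact gg_continuousAt hw
        refine ((hasDerivAt_id w).mul h1).congr_deriv ?_
        simp
  have hint : IntervalIntegrable (fun w => Gg p C w + w * gg p C w) volume 0 t :=
    ((Gg_continuous hp hC).intervalIntegrable 0 t).add (id_mul_gg_intervalIntegrable hp hC 0 t)
  have hFTC := intervalIntegral.integral_eq_sub_of_hasDerivAt hder hint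
  rw [intervalIntegral.integral_add ((Gg_continuous hp hC).intervalIntegrable 0 t)
    (id_mul_gg_intervalIntegrable hp hC 0 t)] at hFTC
  have h0 : (0:ℝ) * Gg p C 0 = 0 := by ring
  rw [h0, sub_zero] at hFTC
  unfold sg
  linarith [hFTC]

lemma rpow_intervalIntegrable (hp : 0 < p) (hC : 0 < C) (c a b : ℝ) :
    IntervalIntegrable (fun w : ℝ => c * (w ^ p / C)) volume a b :=
  ((intervalIntegrable_rpow' (by linarith : (-1:ℝ) < p)).div_const C).const_mul c

lemma integral_rpow_div (hp : 0 < p) (hC : 0 < C) (c : ℝ) {t : ℝ} (ht : 0 < t) :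
    ∫ w in (0:ℝ)..t, c * (w ^ p / C) = c * (t ^ (p + 1) / ((p + 1) * C)) := by
  rw [intervalIntegral.integral_const_mul, intervalIntegral.integral_div,
    integral_rpow (Or.inl (by linarith : (-1:ℝ) < p))]
  rw [Real.zero_rpow (by positivity : p + 1 ≠ 0)]
  field_simp
  ring

lemma sg_lower (hp : 0 < p) (hC : 0 < C) {t : ℝ} (ht : 0 < t) :
    1 * (t ^ (p + 1) / ((p + 1) * C)) ≤ sg p C t := by
  rw [← integral_rpow_div hp hC 1 ht]
  apply intervalIntegral.integral_mono_on (le_of_lt ht)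
    (rpow_intervalIntegrable hp hC 1 0 t) (id_mul_gg_intervalIntegrable hp hC 0 t)
  intro w hw
  rcases eq_or_lt_of_le hw.1 with rfl | hw0
  · simp [Real.zero_rpow hp.ne', gg_of_nonpos (le_refl (0:ℝ))]
  · rw [gg_of_pos hw0, one_mul]
    have hwp : w ^ p = w ^ (p - 1) * w := by
      rw [← Real.rpow_add_one hw0.ne' (p - 1)]; ring_nf
    rw [hwp]
    have h1 : (0:ℝ) ≤ w ^ (p - 1) * w := mul_nonneg (Real.rpow_nonneg hw0.le _) hw.1
    have h2 : (1:ℝ) ≤ Real.exp (w / 2) := Real.one_le_exp (by linarith [hw.1])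
    have h3 : w ^ (p - 1) * w * 1 ≤ w ^ (p - 1) * w * Real.exp (w / 2) :=
      mul_le_mul_of_nonneg_left h2 h1
    rw [mul_one] at h3
    calc w ^ (p - 1) * w / C ≤ w ^ (p - 1) * w * Real.exp (w / 2) / C :=
          (div_le_div_iff_of_pos_right hC).mpr h3
      _ = w * (w ^ (p - 1) * Real.exp (w / 2) / C) := by ring

lemma sg_upper (hp : 0 < p) (hC : 0 < C) {t : ℝ} (ht : 0 < t) :
    sg p C t ≤ Real.exp (t / 2) * (t ^ (p + 1) / ((p + 1) * C)) := by
  rw [← integral_rpow_div hp hC (Real.exp (t / 2)) ht]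
  apply intervalIntegral.integral_mono_on (le_of_lt ht)
    (id_mul_gg_intervalIntegrable hp hC 0 t) (rpow_intervalIntegrable hp hC _ 0 t)
  intro w hw
  rcases eq_or_lt_of_le hw.1 with rfl | hw0
  · simp [Real.zero_rpow hp.ne', gg_of_nonpos (le_refl (0:ℝ))]
  · rw [gg_of_pos hw0]
    have hwp : w ^ p = w ^ (p - 1) * w := by
      rw [← Real.rpow_add_one hw0.ne' (p - 1)]; ring_nf
    have h1 : (0:ℝ) ≤ w ^ (p - 1) * w := mul_nonneg (Real.rpow_nonneg hw0.le _) hw.1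
    have h2 : Real.exp (w / 2) ≤ Real.exp (t / 2) :=
      Real.exp_le_exp.mpr (by linarith [hw.2])
    calc w * (w ^ (p - 1) * Real.exp (w / 2) / C)
        = w ^ (p - 1) * w * Real.exp (w / 2) / C := by ring
      _ ≤ w ^ (p - 1) * w * Real.exp (t / 2) / C :=
          (div_le_div_iff_of_pos_right hC).mpr (mul_le_mul_of_nonneg_left h2 h1)
      _ = Real.exp (t / 2) * (w ^ p / C) := by rw [hwp]; ring

lemma sg_nonneg (hp : 0 < p) (hC : 0 < C) {t : ℝ} (ht : 0 < t) : 0 ≤ sg p C t := by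
  apply intervalIntegral.integral_nonneg (le_of_lt ht)
  intro w hw
  exact mul_nonneg hw.1 (gg_nonneg hC w)

lemma sg_le_t_Gg (hp : 0 < p) (hC : 0 < C) {t : ℝ} (ht : 0 < t) :
    sg p C t ≤ t * Gg p C t := by
  unfold sg Gg
  rw [← intervalIntegral.integral_const_mul]
  apply intervalIntegral.integral_mono_on (le_of_lt ht)
    (id_mul_gg_intervalIntegrable hp hC 0 t)
    ((gg_intervalIntegrable hp hC 0 t).const_mul t)
  intro w hw
  exact mul_le_mul_of_nonneg_right hw.2 (gg_nonneg hC w)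

lemma t_sq_gg (hp : 0 < p) (hC : 0 < C) {t : ℝ} (ht : 0 < t) :
    t ^ 2 * gg p C t = t ^ (p + 1) * Real.exp (t / 2) / C := by
  rw [gg_of_pos ht]
  have h1 : t ^ (p + 1) = t ^ (p - 1) * t * t := by
    rw [show p + 1 = p - 1 + 1 + 1 by ring, Real.rpow_add_one ht.ne',
      Real.rpow_add_one ht.ne']
  rw [h1]; ring

lemma S_bounds (hp : 0 < p) (hC : 0 < C) {t : ℝ} (ht : 0 < t) :
    Real.exp (-(t / 2)) / (p + 1) ≤ sg p C t / (t ^ 2 * gg p C t) ∧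
    sg p C t / (t ^ 2 * gg p C t) ≤ 1 / (p + 1) := by
  have hgg := gg_pos hC ht (p := p)
  have hden : 0 < t ^ 2 * gg p C t := by positivity
  have hden' : t ^ 2 * gg p C t = t ^ (p + 1) * Real.exp (t / 2) / C := t_sq_gg hp hC ht
  have htp : 0 < t ^ (p + 1) := Real.rpow_pos_of_pos ht _
  constructor
  · rw [div_le_div_iff₀ (by positivity) hden]
    calc Real.exp (-(t / 2)) * (t ^ 2 * gg p C t)
        = t ^ (p + 1) / ((p + 1) * C) * (p + 1) := by
          rw [hden', Real.exp_neg]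
          field_simp
      _ ≤ sg p C t * (p + 1) := by
          have := sg_lower hp hC ht
          rw [one_mul] at this
          nlinarith [this]
  · rw [div_le_div_iff₀ hden (by positivity)]
    calc sg p C t * (p + 1) ≤ Real.exp (t / 2) * (t ^ (p + 1) / ((p + 1) * C)) * (p + 1) := by
          nlinarith [sg_upper hp hC ht]
      _ = 1 * (t ^ 2 * gg p C t) := by
          rw [hden']; field_simp

lemma rho_lower (hp : 0 < p) (hC : 0 < C) {t : ℝ} (ht : 0 < t) :
    2 * t * gg p C t ≤ (2 * p + t) * Gg p C t := by
  nlinarith [keyIdentity' hp hC ht, sg_le_t_Gg hp hC ht]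

lemma integral_rpow_div' {q : ℝ} (hq : -1 < q) (hC : 0 < C) (c : ℝ) (t : ℝ) :
    ∫ w in (0:ℝ)..t, c * (w ^ q / C) = c * (t ^ (q + 1) / ((q + 1) * C)) := by
  rw [intervalIntegral.integral_const_mul, intervalIntegral.integral_div,
    integral_rpow (Or.inl hq)]
  rw [Real.zero_rpow (by linarith : q + 1 ≠ 0)]
  field_simp
  ring

lemma rpow_intervalIntegrable' {q : ℝ} (hq : -1 < q) (hC : 0 < C) (c a b : ℝ) :
    IntervalIntegrable (fun w : ℝ => c * (w ^ q / C)) volume a b :=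
  ((intervalIntegrable_rpow' hq).div_const C).const_mul c

lemma Gg_first_piece (hp : 0 < p) (hC : 0 < C) {t : ℝ} (ht : 0 < t) :
    ∫ w in (0:ℝ)..(t/2), gg p C w
      ≤ Real.exp (t / 4) * ((t / 2) ^ p / (p * C)) := by
  have hq : (-1:ℝ) < p - 1 := by linarith
  have key : ∫ w in (0:ℝ)..(t/2), gg p C w
      ≤ ∫ w in (0:ℝ)..(t/2), Real.exp (t / 4) * (w ^ (p - 1) / C) := by
    apply intervalIntegral.integral_mono_on (by linarith)
      (gg_intervalIntegrable hp hC 0 (t/2)) (rpow_intervalIntegrable' hq hC _ 0 (t/2))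
    intro w hw
    rcases eq_or_lt_of_le hw.1 with rfl | hw0
    · rw [gg_of_nonpos le_rfl]
      positivity
    · rw [gg_of_pos hw0]
      have h2 : Real.exp (w / 2) ≤ Real.exp (t / 4) :=
        Real.exp_le_exp.mpr (by linarith [hw.2])
      calc w ^ (p - 1) * Real.exp (w / 2) / C ≤ w ^ (p - 1) * Real.exp (t / 4) / C := by
            apply (div_le_div_iff_of_pos_right hC).mpr
            exact mul_le_mul_of_nonneg_left h2 (Real.rpow_nonneg hw0.le _)
        _ = Real.exp (t / 4) * (w ^ (p - 1) / C) := by ring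
  rw [integral_rpow_div' hq hC _ (t/2)] at key
  have : p - 1 + 1 = p := by ring
  rw [this] at key
  exact key

lemma exp_integral_aux {c t : ℝ} (hc : 0 < c) (ht : 0 < t) :
    ∫ s in (t/2)..t, Real.exp ((s - t) * c) = (1 - Real.exp ((t/2 - t) * c)) / c := by
  have hder : ∀ s ∈ uIcc (t/2) t, HasDerivAt (fun s => Real.exp ((s - t) * c) / c)
      (Real.exp ((s - t) * c)) s := by
    intro s _
    have h1 : HasDerivAt (fun s : ℝ => (s - t) * c) c s := by
      simpa using ((hasDerivAt_id s).sub_const t).mul_const c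
    have h2 := (Real.hasDerivAt_exp ((s - t) * c)).comp s h1
    have h3 := h2.div_const c
    refine h3.congr_deriv ?_
    field_simp
  have hint : IntervalIntegrable (fun s => Real.exp ((s - t) * c)) volume (t/2) t :=
    (Real.continuous_exp.comp ((continuous_id.sub continuous_const).mul
      continuous_const)).intervalIntegrable _ _
  rw [intervalIntegral.integral_eq_sub_of_hasDerivAt hder hint]
  rw [show ((t:ℝ) - t) * c = 0 by ring, Real.exp_zero]
  ring

lemma Gg_second_piece (hp : 0 < p) (hC : 0 < C) {t : ℝ}
    (ht : 8 * |p - 1| + 8 ≤ t) :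
    ∫ w in (t/2)..t, gg p C w ≤ gg p C t * (1/2 - 2 * |p - 1| / t)⁻¹ := by
  set A := |p - 1| with hA
  have hA0 : 0 ≤ A := abs_nonneg _
  have ht0 : 0 < t := by linarith
  set c : ℝ := 1/2 - 2 * A / t with hc_def
  have hc : 0 < c := by
    have h1 : 2 * A / t ≤ 1/4 := by
      rw [div_le_iff₀ ht0]
      linarith
    rw [hc_def]; linarith
  have hptwise : ∀ s ∈ Icc (t/2) t, gg p C s ≤ gg p C t * Real.exp ((s - t) * c) := by
    intro s hs
    have hs0 : 0 < s := by linarith [hs.1]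
    have hst : s ≤ t := hs.2
    rw [gg_of_pos hs0, gg_of_pos ht0]
    -- reduce to s^(p-1) ≤ t^(p-1) * exp (2A(t-s)/t)
    have hkey : s ^ (p - 1) ≤ t ^ (p - 1) * Real.exp (2 * A * (t - s) / t) := by
      have hdiv : (0:ℝ) < s / t := by positivity
      have hlog1 : Real.log (s / t) ≤ 0 :=
        Real.log_nonpos (le_of_lt hdiv) (by rw [div_le_one ht0]; exact hst)
      have h1 : (p - 1) * Real.log (s / t) ≤ A * (-Real.log (s / t)) := by
        calc (p - 1) * Real.log (s / t) ≤ |(p - 1) * Real.log (s / t)| := le_abs_self _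
          _ = A * |Real.log (s / t)| := by rw [abs_mul]
          _ = A * (-Real.log (s / t)) := by rw [abs_of_nonpos hlog1]
      have h2 : -Real.log (s / t) = Real.log (t / s) := by
        rw [← Real.log_inv]
        congr 1
        field_simp
      have h3 : Real.log (t / s) ≤ t / s - 1 :=
        Real.log_le_sub_one_of_pos (by positivity)
      have h4 : t / s - 1 ≤ 2 * (t - s) / t := by
        rw [div_sub_one hs0.ne', div_le_div_iff₀ hs0 ht0]
        nlinarith [hs.1, sub_nonneg.mpr hst]
      have h5 : (p - 1) * Real.log (s / t) ≤ 2 * A * (t - s) / t := by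
        rw [h2] at h1
        calc (p - 1) * Real.log (s / t) ≤ A * Real.log (t / s) := h1
          _ ≤ A * (2 * (t - s) / t) := by
              apply mul_le_mul_of_nonneg_left _ hA0
              linarith
          _ = 2 * A * (t - s) / t := by ring
      calc s ^ (p - 1) = t ^ (p - 1) * (s / t) ^ (p - 1) := by
            rw [Real.div_rpow hs0.le ht0.le]
            field_simp [ne_of_gt (Real.rpow_pos_of_pos ht0 (p - 1))]
        _ ≤ t ^ (p - 1) * Real.exp (2 * A * (t - s) / t) := by
            apply mul_le_mul_of_nonneg_left _ (Real.rpow_nonneg ht0.le _)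
            rw [Real.rpow_def_of_pos hdiv]
            apply Real.exp_le_exp.mpr
            rw [mul_comm]
            exact h5
    -- combine
    calc s ^ (p - 1) * Real.exp (s / 2) / C
        ≤ t ^ (p - 1) * Real.exp (2 * A * (t - s) / t) * Real.exp (s / 2) / C := by
          apply (div_le_div_iff_of_pos_right hC).mpr
          exact mul_le_mul_of_nonneg_right hkey (Real.exp_pos _).le
      _ = t ^ (p - 1) * Real.exp (t / 2) / C * Real.exp ((s - t) * c) := by
          have harg : 2 * A * (t - s) / t + s / 2 = t / 2 + (s - t) * c := by
            rw [hc_def]; field_simp; ring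
          rw [mul_assoc, ← Real.exp_add, harg, Real.exp_add]
          ring
  have hmono : ∫ w in (t/2)..t, gg p C w
      ≤ ∫ s in (t/2)..t, gg p C t * Real.exp ((s - t) * c) := by
    apply intervalIntegral.integral_mono_on (by linarith)
      (gg_intervalIntegrable hp hC _ _)
      (((Real.continuous_exp.comp ((continuous_id.sub continuous_const).mul
        continuous_const)).intervalIntegrable _ _).const_mul _)
    exact hptwise
  rw [intervalIntegral.integral_const_mul, exp_integral_aux hc ht0] at hmono
  calc ∫ w in (t/2)..t, gg p C w
      ≤ gg p C t * ((1 - Real.exp ((t/2 - t) * c)) / c) := hmono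
    _ ≤ gg p C t * c⁻¹ := by
        apply mul_le_mul_of_nonneg_left _ (gg_nonneg hC t)
        rw [div_le_iff₀ hc, inv_mul_cancel₀ hc.ne']
        nlinarith [Real.exp_pos ((t/2 - t) * c)]

lemma Gg_upper (hp : 0 < p) (hC : 0 < C) {t : ℝ} (ht : 8 * |p - 1| + 8 ≤ t) :
    Gg p C t ≤ ((1/2 - 2 * |p - 1| / t)⁻¹ + (2:ℝ) ^ (-p) / p * (t * Real.exp (-(t/4))))
      * gg p C t := by
  have hA0 : 0 ≤ |p - 1| := abs_nonneg _
  have ht0 : 0 < t := by linarith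
  have hsplit : Gg p C t = (∫ w in (0:ℝ)..(t/2), gg p C w) + ∫ w in (t/2)..t, gg p C w :=
    (intervalIntegral.integral_add_adjacent_intervals
      (gg_intervalIntegrable hp hC 0 (t/2)) (gg_intervalIntegrable hp hC (t/2) t)).symm
  have hb1 := Gg_first_piece hp hC ht0
  have hb2 := Gg_second_piece hp hC ht
  have heq : Real.exp (t / 4) * ((t / 2) ^ p / (p * C))
      = (2:ℝ) ^ (-p) / p * (t * Real.exp (-(t/4))) * gg p C t := by
    rw [gg_of_pos ht0]
    have e1 : (t/2) ^ p = t ^ p / 2 ^ p := Real.div_rpow ht0.le (by norm_num : (0:ℝ) ≤ 2) p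
    have e2 : (2:ℝ) ^ (-p) = ((2:ℝ) ^ p)⁻¹ := Real.rpow_neg (by norm_num) p
    have e3 : t ^ p = t ^ (p - 1) * t := by
      rw [← Real.rpow_add_one ht0.ne' (p - 1)]; ring_nf
    have h2p : (0:ℝ) < (2:ℝ) ^ p := Real.rpow_pos_of_pos (by norm_num) p
    rw [e1, e2, e3]
    rw [show Real.exp (t/4) = Real.exp (-(t/4)) * Real.exp (t/2) by
      rw [← Real.exp_add]; ring_nf]
    field_simp
  rw [hsplit]
  calc (∫ w in (0:ℝ)..(t/2), gg p C w) + ∫ w in (t/2)..t, gg p C w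
      ≤ Real.exp (t / 4) * ((t / 2) ^ p / (p * C)) + gg p C t * (1/2 - 2 * |p - 1| / t)⁻¹ :=
        add_le_add hb1 hb2
    _ = ((1/2 - 2 * |p - 1| / t)⁻¹ + (2:ℝ) ^ (-p) / p * (t * Real.exp (-(t/4)))) * gg p C t := by
        rw [heq]; ring

lemma integral_comp_flip (f : ℝ → ℝ) (ν x : ℝ) :
    (∫ u in x..(-ν), f (-(u + ν))) = ∫ w in (0:ℝ)..(-(x + ν)), f w := by
  calc (∫ u in x..(-ν), f (-(u + ν)))
      = ∫ u in x..(-ν), (fun v => f (v - ν)) (-u) := by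
        apply intervalIntegral.integral_congr
        intro u _
        simp only
        congr 1
        ring
    _ = ∫ v in (-(-ν))..(-x), f (v - ν) := by
        simpa using intervalIntegral.integral_comp_neg (fun v => f (v - ν)) (a := x) (b := -ν)
    _ = ∫ w in ((-(-ν)) - ν)..((-x) - ν), f w := intervalIntegral.integral_comp_sub_right _ ν
    _ = ∫ w in (0:ℝ)..(-(x + ν)), f w := by
        congr 1 <;> ring

lemma qnu_eq_gg {ν : ℝ} (hpdef : p = ν / 2) (hCdef : C = 2 ^ (ν / 2) * Real.Gamma (ν / 2))
    (x : ℝ) : qnu ν x = gg p C (-(x + ν)) := by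
  subst hpdef hCdef
  unfold qnu gg
  split_ifs with h1 h2 h2
  · rfl
  · exfalso; apply h2; linarith
  · exfalso; apply h1; linarith
  · rfl

lemma Ftilnu_eq_Gg {ν : ℝ} (hpdef : p = ν / 2) (hCdef : C = 2 ^ (ν / 2) * Real.Gamma (ν / 2))
    (x : ℝ) : Ftilnu ν x = Gg p C (-(x + ν)) := by
  unfold Ftilnu Gg
  rw [← integral_comp_flip (gg p C) ν x]
  apply intervalIntegral.integral_congr
  intro u _
  exact qnu_eq_gg hpdef hCdef u

lemma Rnu_eq_base {ν : ℝ} (hν : 0 < ν) (hpdef : p = ν / 2)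
    (hCdef : C = 2 ^ (ν / 2) * Real.Gamma (ν / 2)) (hp : 0 < p) (hC : 0 < C)
    {x : ℝ} (hx : x < -ν) :
    Rnu ν x = (ν + (-(x + ν))) * ((-(x + ν)) * Gg p C (-(x + ν)) - sg p C (-(x + ν)))
      / (gg p C (-(x + ν)) * (-(x + ν)) ^ 2) := by
  set t : ℝ := -(x + ν) with htdef
  have ht : 0 < t := by rw [htdef]; linarith
  unfold Rnu
  have h1 : (∫ u in x..(-ν), Ftilnu ν u) = t * Gg p C t - sg p C t := by
    calc (∫ u in x..(-ν), Ftilnu ν u) = ∫ u in x..(-ν), Gg p C (-(u + ν)) := by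
          apply intervalIntegral.integral_congr
          intro u _
          exact Ftilnu_eq_Gg hpdef hCdef u
      _ = ∫ w in (0:ℝ)..t, Gg p C w := integral_comp_flip (Gg p C) ν x
      _ = t * Gg p C t - sg p C t := GgIdentity hp hC t
  rw [h1, qnu_eq_gg hpdef hCdef x]
  have h2 : (x + ν) ^ 2 = t ^ 2 := by rw [htdef]; ring
  have h3 : -2 * x = 2 * (ν + t) := by rw [htdef]; ring
  rw [h2, h3]
  rw [show 2 * (ν + t) * (t * Gg p C t - sg p C t) / (2 * gg p C t * t ^ 2)
      = 2 * ((ν + t) * (t * Gg p C t - sg p C t)) / (2 * (gg p C t * t ^ 2)) by ring_nf,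
    mul_div_mul_left _ _ (two_ne_zero)]

lemma form0_algebra {ν t G S g : ℝ} (hν : ν ≠ 0) (ht : t ≠ 0) (hg : g ≠ 0)
    (hkey : ν * G + S = 2 * t * g) :
    (ν + t) * (t * G - S) / (g * t ^ 2) = (ν + t) * (2 - (ν + t) * (S / (t ^ 2 * g))) / ν := by
  have hG : G = (2 * t * g - S) / ν := by field_simp; linarith
  rw [hG]; field_simp; ring

lemma formInf_algebra {ν t G S g : ℝ} (ht : t ≠ 0) (hg : g ≠ 0)
    (hkey : ν * G + S = 2 * t * g) :
    (ν + t) * (t * G - S) / (g * t ^ 2)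
      = ((ν + t) / t) ^ 2 * (G / g) - 2 * ((ν + t) / t) := by
  have hS : S = 2 * t * g - ν * G := by linarith
  rw [hS]; field_simp; ring

lemma key_nu {ν : ℝ} (hpdef : p = ν / 2) (hp : 0 < p) (hC : 0 < C) {t : ℝ} (ht : 0 < t) :
    ν * Gg p C t + sg p C t = 2 * t * gg p C t := by
  have hkey := keyIdentity' hp hC ht
  have h2p : 2 * p = ν := by rw [hpdef]; ring
  linarith [hkey, h2p.symm ▸ hkey]

lemma Rnu_form0 {ν : ℝ} (hν : 0 < ν) (hpdef : p = ν / 2)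
    (hCdef : C = 2 ^ (ν / 2) * Real.Gamma (ν / 2)) (hp : 0 < p) (hC : 0 < C)
    {x : ℝ} (hx : x < -ν) :
    Rnu ν x = (ν + (-(x + ν)))
      * (2 - (ν + (-(x + ν))) * (sg p C (-(x + ν)) / ((-(x + ν)) ^ 2 * gg p C (-(x + ν)))))
      / ν := by
  have ht : 0 < -(x + ν) := by linarith
  rw [Rnu_eq_base hν hpdef hCdef hp hC hx]
  exact form0_algebra hν.ne' ht.ne' (gg_pos hC ht).ne' (key_nu hpdef hp hC ht)

lemma Rnu_formInf {ν : ℝ} (hν : 0 < ν) (hpdef : p = ν / 2)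
    (hCdef : C = 2 ^ (ν / 2) * Real.Gamma (ν / 2)) (hp : 0 < p) (hC : 0 < C)
    {x : ℝ} (hx : x < -ν) :
    Rnu ν x = ((ν + (-(x + ν))) / (-(x + ν))) ^ 2
        * (Gg p C (-(x + ν)) / gg p C (-(x + ν)))
      - 2 * ((ν + (-(x + ν))) / (-(x + ν))) := by
  have ht : 0 < -(x + ν) := by linarith
  rw [Rnu_eq_base hν hpdef hCdef hp hC hx]
  exact formInf_algebra ht.ne' (gg_pos hC ht).ne' (key_nu hpdef hp hC ht)

lemma tendsto_S (hp : 0 < p) (hC : 0 < C) :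
    Tendsto (fun t => sg p C t / (t ^ 2 * gg p C t)) (𝓝[>] (0:ℝ)) (𝓝 (1 / (p + 1))) := by
  have hlow : Tendsto (fun t : ℝ => Real.exp (-(t / 2)) / (p + 1)) (𝓝[>] (0:ℝ))
      (𝓝 (1 / (p + 1))) := by
    have : ContinuousAt (fun t : ℝ => Real.exp (-(t / 2)) / (p + 1)) 0 := by
      apply ContinuousAt.div_const
      exact (Real.continuous_exp.comp (continuous_id.div_const 2).neg).continuousAt
    have h0 : Real.exp (-((0:ℝ) / 2)) / (p + 1) = 1 / (p + 1) := by norm_num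
    rw [ContinuousAt, h0] at this
    exact this.mono_left nhdsWithin_le_nhds
  apply tendsto_of_tendsto_of_tendsto_of_le_of_le' hlow tendsto_const_nhds
  · filter_upwards [self_mem_nhdsWithin] with t ht
    exact (S_bounds hp hC ht).1
  · filter_upwards [self_mem_nhdsWithin] with t ht
    exact (S_bounds hp hC ht).2

lemma tendsto_t_exp : Tendsto (fun t : ℝ => t * Real.exp (-(t/4))) atTop (𝓝 0) := by
  have h4 : Tendsto (fun t : ℝ => t / 4) atTop atTop :=
    tendsto_id.atTop_div_const (by norm_num)
  have h1 := ((tendsto_pow_mul_exp_neg_atTop_nhds_zero 1).comp h4).const_mul (4:ℝ)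
  have h2 : ∀ t : ℝ, 4 * ((fun x : ℝ => x ^ 1 * Real.exp (-x)) (t / 4))
      = t * Real.exp (-(t/4)) := by
    intro t; simp only [pow_one]; ring
  have h3 := h1.congr h2
  simpa using h3

lemma tendsto_rho (hp : 0 < p) (hC : 0 < C) :
    Tendsto (fun t => Gg p C t / gg p C t) atTop (𝓝 2) := by
  have hinv : Tendsto (fun t : ℝ => 2 * p / t) atTop (𝓝 0) :=
    tendsto_const_nhds.div_atTop tendsto_id
  have hlow : Tendsto (fun t : ℝ => 2 * t / (2 * p + t)) atTop (𝓝 2) := by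
    have h1 : Tendsto (fun t : ℝ => 2 / (2 * p / t + 1)) atTop (𝓝 2) := by
      have h2 := (tendsto_const_nhds (x := (2:ℝ))).div
        (hinv.add (tendsto_const_nhds (x := (1:ℝ)))) (by norm_num)
      rw [zero_add, div_one] at h2; exact h2
    apply h1.congr'
    filter_upwards [eventually_gt_atTop (0:ℝ)] with t ht
    have hd : (0:ℝ) < 2 * p + t := by linarith
    field_simp
  have hU1 : Tendsto (fun t : ℝ => (1/2 - 2 * |p - 1| / t)⁻¹) atTop (𝓝 2) := by
    have h1 : Tendsto (fun t : ℝ => 1/2 - 2 * |p - 1| / t) atTop (𝓝 (1/2)) := by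
      have h2 : Tendsto (fun t : ℝ => 2 * |p - 1| / t) atTop (𝓝 0) :=
        tendsto_const_nhds.div_atTop tendsto_id
      simpa using (tendsto_const_nhds (x := (1/2:ℝ))).sub h2
    have h3 := h1.inv₀ (by norm_num : (1/2:ℝ) ≠ 0)
    rw [show ((1:ℝ)/2)⁻¹ = 2 by norm_num] at h3
    exact h3
  have hU2 : Tendsto (fun t : ℝ => (2:ℝ) ^ (-p) / p * (t * Real.exp (-(t/4)))) atTop
      (𝓝 0) := by
    simpa using tendsto_t_exp.const_mul ((2:ℝ) ^ (-p) / p)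
  have hup : Tendsto (fun t : ℝ => (1/2 - 2 * |p - 1| / t)⁻¹
      + (2:ℝ) ^ (-p) / p * (t * Real.exp (-(t/4)))) atTop (𝓝 2) := by
    simpa using hU1.add hU2
  apply tendsto_of_tendsto_of_tendsto_of_le_of_le' hlow hup
  · filter_upwards [eventually_gt_atTop (0:ℝ)] with t ht
    have hgg := gg_pos hC ht (p := p)
    rw [div_le_div_iff₀ (by linarith) hgg]
    nlinarith [rho_lower hp hC ht]
  · filter_upwards [eventually_ge_atTop (8 * |p - 1| + 8)] with t ht
    have ht0 : 0 < t := by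
      have := abs_nonneg (p - 1); linarith
    have hgg := gg_pos hC ht0 (p := p)
    rw [div_le_iff₀ hgg]
    simpa [mul_comm] using Gg_upper hp hC ht

/-- `R_ν` tends to `4/(2+ν)` at `-ν⁻`, to `0` at `-∞`, and is bounded on `(-∞, -ν)`. -/
theorem Rnu_limits_and_bounded (ν : ℝ) (hν : 0 < ν) :
    Tendsto (Rnu ν) (𝓝[<] (-ν)) (𝓝 (4 / (2 + ν))) ∧
    Tendsto (Rnu ν) atBot (𝓝 0) ∧
    (∃ M : ℝ, ∀ x : ℝ, x < -ν → |Rnu ν x| ≤ M) := by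
  have hΓ : 0 < Real.Gamma (ν / 2) := Real.Gamma_pos_of_pos (by linarith)
  set p : ℝ := ν / 2 with hpdef
  set C : ℝ := 2 ^ (ν / 2) * Real.Gamma (ν / 2) with hCdef
  have hp : 0 < p := by rw [hpdef]; linarith
  have hC : 0 < C := by
    rw [hCdef]
    have : (0:ℝ) < 2 ^ (ν / 2) := Real.rpow_pos_of_pos (by norm_num) _
    positivity
  have hφ1 : Tendsto (fun x : ℝ => -(x + ν)) (𝓝[<] (-ν)) (𝓝[>] (0:ℝ)) := by
    apply tendsto_nhdsWithin_of_tendsto_nhds_of_eventually_within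
    · have hc : Tendsto (fun x : ℝ => -(x + ν)) (𝓝 (-ν)) (𝓝 (-((-ν) + ν))) :=
        ((continuous_id.add continuous_const).neg).tendsto _
      have := hc.mono_left (nhdsWithin_le_nhds (s := Iio (-ν)))
      simpa using this
    · filter_upwards [self_mem_nhdsWithin] with x hx
      have hx' : x < -ν := hx
      simp only [Set.mem_Ioi]
      linarith
  have part1 : Tendsto (Rnu ν) (𝓝[<] (-ν)) (𝓝 (4 / (2 + ν))) := by
    have hS := tendsto_S hp hC
    have htid : Tendsto (fun t : ℝ => t) (𝓝[>] (0:ℝ)) (𝓝 0) :=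
      tendsto_id.mono_right nhdsWithin_le_nhds
    have hform := (((tendsto_const_nhds (x := ν)).add htid).mul
      ((tendsto_const_nhds (x := (2:ℝ))).sub
        (((tendsto_const_nhds (x := ν)).add htid).mul hS))).div_const ν
    have hval : (ν + 0) * (2 - (ν + 0) * (1 / (p + 1))) / ν = 4 / (2 + ν) := by
      rw [hpdef]
      have h1 : ν / 2 + 1 ≠ 0 := by linarith
      have h2 : (2:ℝ) + ν ≠ 0 := by linarith
      field_simp
      ring
    rw [hval] at hform
    have hcomp := hform.comp hφ1
    apply hcomp.congr'
    filter_upwards [self_mem_nhdsWithin] with x hx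
    exact (Rnu_form0 hν hpdef hCdef hp hC hx).symm
  have hφ2 : Tendsto (fun x : ℝ => -(x + ν)) atBot atTop := by
    have h1 : Tendsto (fun x : ℝ => -x) atBot atTop := tendsto_neg_atBot_atTop
    have h2 := tendsto_atTop_add_const_right atBot (-ν) h1
    exact h2.congr (fun x => by ring)
  have part2 : Tendsto (Rnu ν) atBot (𝓝 0) := by
    have hρ := tendsto_rho hp hC
    have h1 : Tendsto (fun t : ℝ => (ν + t) / t) atTop (𝓝 1) := by
      have h2 : Tendsto (fun t : ℝ => ν / t + 1) atTop (𝓝 1) := by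
        simpa using ((tendsto_const_nhds (x := ν)).div_atTop tendsto_id).add
          (tendsto_const_nhds (x := (1:ℝ)))
      apply h2.congr'
      filter_upwards [eventually_gt_atTop (0:ℝ)] with t ht
      field_simp
    have hform := ((h1.pow 2).mul hρ).sub (h1.const_mul 2)
    rw [show (1:ℝ) ^ 2 * 2 - 2 * 1 = 0 by norm_num] at hform
    have hcomp := hform.comp hφ2
    apply hcomp.congr'
    filter_upwards [eventually_lt_atBot (-ν)] with x hx
    exact (Rnu_formInf hν hpdef hCdef hp hC hx).symm
  refine ⟨part1, part2, ?_⟩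
  have habs : Tendsto (fun x => |Rnu ν x|) atBot (𝓝 0) := by
    simpa using part2.abs
  have hev : ∀ᶠ x in atBot, |Rnu ν x| < 1 := habs.eventually_lt_const one_pos
  obtain ⟨x₀, hx₀⟩ := eventually_atBot.mp hev
  set T : ℝ := max 1 (-x₀ - ν) with hT
  have hT1 : (1:ℝ) ≤ T := le_max_left _ _
  refine ⟨max 1 ((ν + T) * (2 + (ν + T) * (1 / (p + 1))) / ν), ?_⟩
  intro x hx
  by_cases hcase : x ≤ x₀
  · exact le_trans (hx₀ x hcase).le (le_max_left _ _)
  · push_neg at hcase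
    set t : ℝ := -(x + ν) with htdef
    have ht : 0 < t := by rw [htdef]; linarith
    have htT : t ≤ T := by
      have : -x₀ - ν ≤ T := le_max_right _ _
      rw [htdef]; linarith
    have hSb := S_bounds hp hC ht
    have hS0 : 0 ≤ sg p C t / (t ^ 2 * gg p C t) :=
      div_nonneg (sg_nonneg hp hC ht) (mul_nonneg (by positivity) (gg_nonneg hC t))
    rw [Rnu_form0 hν hpdef hCdef hp hC hx]
    apply le_trans _ (le_max_right 1 _)
    rw [abs_div, abs_mul, abs_of_pos hν, abs_of_pos (by linarith : (0:ℝ) < ν + t)]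
    apply (div_le_div_iff_of_pos_right hν).mpr
    have hX : |2 - (ν + t) * (sg p C t / (t ^ 2 * gg p C t))| ≤ 2 + (ν + T) * (1 / (p + 1)) := by
      rw [abs_le]
      constructor
      · have h1 : (ν + t) * (sg p C t / (t ^ 2 * gg p C t)) ≤ (ν + T) * (1 / (p + 1)) := by
          apply mul_le_mul (by linarith) hSb.2 hS0 (by linarith)
        nlinarith [mul_nonneg (by linarith : (0:ℝ) ≤ ν + T) (by positivity : (0:ℝ) ≤ 1 / (p+1))]
      · have h2 : 0 ≤ (ν + t) * (sg p C t / (t ^ 2 * gg p C t)) :=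
          mul_nonneg (by linarith) hS0
        nlinarith [mul_nonneg (by linarith : (0:ℝ) ≤ ν + T) (by positivity : (0:ℝ) ≤ 1 / (p+1))]
    calc (ν + t) * |2 - (ν + t) * (sg p C t / (t ^ 2 * gg p C t))|
        ≤ (ν + T) * (2 + (ν + T) * (1 / (p + 1))) := by
          apply mul_le_mul (by linarith) hX (abs_nonneg _) (by linarith)
      _ = (ν + T) * (2 + (ν + T) * (1 / (p + 1))) := rfl
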